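/- Let φ be an LTL∨PSL formula, D = (I⁺, I⁻) a partition of the set I of subformulae of φ of the form s ≼ s', and suppose M, σ, 0 ⊨ φ_D for an SLTL model M = (Π, λ) and σ ∈ Π. For each i ∈ ℕ let B_i := {ψ ∈ cl(φ_D) | M, σ, i ⊨ ψ} and A_i := B_i ∩ P(φ_D). Then each B_i is s-elementary, and B₀B₁… is an accepting run of the generalised nondeterministic Büchi automaton A_{φ_D} on the word A₀A₁…. -/

import Mathlib

/-! ### SLTL: syntax, models, satisfaction -/

inductive SForm : Type where
  | var : ℕ → SForm
  | le : ℕ → ℕ → SForm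
  | tru : SForm
  | fls : SForm
  | neg : SForm → SForm
  | conj : SForm → SForm → SForm
  | dia : ℕ → SForm → SForm
  | box : ℕ → SForm → SForm
  | next : SForm → SForm
  | until_ : SForm → SForm → SForm

/-- Traces: ω-sequences of propositional valuations. -/
abbrev Trace := ℕ → Set ℕ

/-- An SLTL model `(Π, λ)`; standpoint symbols are natural numbers, `0` is the
universal standpoint `*`. -/
structure SLTLModel where
  Pi : Set Trace
  lam : ℕ → Set Trace
  pi_nonempty : Pi.Nonempty
  lam_sub : ∀ s, lam s ⊆ Pi
  lam_nonempty : ∀ s, (lam s).Nonempty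
  lam_star : lam 0 = Pi

def SSat (M : SLTLModel) : SForm → Trace → ℕ → Prop
  | .var p, σ, i => p ∈ σ i
  | .le s s', _, _ => M.lam s ⊆ M.lam s'
  | .tru, _, _ => True
  | .fls, _, _ => False
  | .neg a, σ, i => ¬ SSat M a σ i
  | .conj a b, σ, i => SSat M a σ i ∧ SSat M b σ i
  | .dia s a, _, i => ∃ σ' ∈ M.lam s, SSat M a σ' i
  | .box s a, _, i => ∀ σ' ∈ M.lam s, SSat M a σ' i
  | .next a, σ, i => SSat M a σ (i + 1)
  | .until_ a b, σ, i =>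
      ∃ i', i ≤ i' ∧ SSat M b σ i' ∧ ∀ i'', i ≤ i'' → i'' < i' → SSat M a σ i''

def SLTLSatisfiable (φ : SForm) : Prop :=
  ∃ M : SLTLModel, ∃ σ ∈ M.Pi, SSat M φ σ 0

def SForm.impl (a b : SForm) : SForm := .neg (.conj a (.neg b))
def SForm.iffc (a b : SForm) : SForm := .conj (a.impl b) (b.impl a)
/-- `G φ := ¬(⊤ U ¬φ)`. -/
def SForm.G (a : SForm) : SForm := .neg (.until_ .tru (.neg a))
def bigAnd (l : List SForm) : SForm := l.foldr .conj .tru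
/-- The list `[a, a+1, …, b]`. -/
def listIcc (a b : ℕ) : List ℕ := (List.range (b + 1 - a)).map (fun k => a + k)

/-- Propositional variables occurring in a formula. -/
def varsSF : SForm → Finset ℕ
  | .var p => {p}
  | .le _ _ => ∅
  | .tru => ∅
  | .fls => ∅
  | .neg a => varsSF a
  | .conj a b => varsSF a ∪ varsSF b
  | .dia _ a => varsSF a
  | .box _ a => varsSF a
  | .next a => varsSF a
  | .until_ a b => varsSF a ∪ varsSF b

/-- Standpoint symbols occurring in a formula. -/
def standsSF : SForm → Finset ℕ
  | .var _ => ∅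
  | .le s s' => {s, s'}
  | .tru => ∅
  | .fls => ∅
  | .neg a => standsSF a
  | .conj a b => standsSF a ∪ standsSF b
  | .dia s a => insert s (standsSF a)
  | .box s a => insert s (standsSF a)
  | .next a => standsSF a
  | .until_ a b => standsSF a ∪ standsSF b

/-- No temporal connective (`X` or `U`) occurs in the formula. -/
def noTemp : SForm → Prop
  | .neg a => noTemp a
  | .conj a b => noTemp a ∧ noTemp b
  | .dia _ a => noTemp a
  | .box _ a => noTemp a
  | .next _ => False
  | .until_ _ _ => False
  | _ => True

/-- The fragment LTL∨PSL: no temporal connective occurs within the scope of a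
standpoint modality. -/
def isLTLPSL : SForm → Prop
  | .neg a => isLTLPSL a
  | .conj a b => isLTLPSL a ∧ isLTLPSL b
  | .dia _ a => noTemp a
  | .box _ a => noTemp a
  | .next a => isLTLPSL a
  | .until_ a b => isLTLPSL a ∧ isLTLPSL b
  | _ => True

def sizeSF : SForm → ℕ
  | .var _ => 1
  | .le _ _ => 1
  | .tru => 1
  | .fls => 1
  | .neg a => sizeSF a + 1
  | .conj a b => sizeSF a + sizeSF b + 1
  | .dia _ a => sizeSF a + 1
  | .box _ a => sizeSF a + 1
  | .next a => sizeSF a + 1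
  | .until_ a b => sizeSF a + sizeSF b + 1

/-! ### The formula `φ_D` for a partition `D = (I⁺, I⁻)` of the `≼`-subformulae -/

/-- The pairs `(s, s')` such that `s ≼ s'` is a subformula of the given formula. -/
def leSubs : SForm → Finset (ℕ × ℕ)
  | .var _ => ∅
  | .le s s' => {(s, s')}
  | .tru => ∅
  | .fls => ∅
  | .neg a => leSubs a
  | .conj a b => leSubs a ∪ leSubs b
  | .dia _ a => leSubs a
  | .box _ a => leSubs a
  | .next a => leSubs a
  | .until_ a b => leSubs a ∪ leSubs b

/-- `φ[I⁺ ↦ ⊤, I⁻ ↦ ⊥]`: replace each subformula `s ≼ s'` with `(s,s') ∈ P`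
by `⊤` and each with `(s,s') ∈ N` by `⊥`. -/
def substLe (P N : Finset (ℕ × ℕ)) : SForm → SForm
  | .var p => .var p
  | .le s s' => if (s, s') ∈ P then .tru else if (s, s') ∈ N then .fls else .le s s'
  | .tru => .tru
  | .fls => .fls
  | .neg a => .neg (substLe P N a)
  | .conj a b => .conj (substLe P N a) (substLe P N b)
  | .dia s a => .dia s (substLe P N a)
  | .box s a => .box s (substLe P N a)
  | .next a => .next (substLe P N a)
  | .until_ a b => .until_ (substLe P N a) (substLe P N b)

/-- `ψ_D := G( ⋀_{(s≼s')∈I⁺} (s ≼ s') ∧ ⋀_{(s≼s')∈I⁻} (◇_s p_{s,s'} ∧ ¬◇_{s'} p_{s,s'}) )`,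
where `pv (s,s')` is the fresh variable `p_{s,s'}`. -/
noncomputable def psiD (P N : Finset (ℕ × ℕ)) (pv : ℕ × ℕ → ℕ) : SForm :=
  SForm.G (.conj
    (bigAnd (P.toList.map (fun pr => SForm.le pr.1 pr.2)))
    (bigAnd (N.toList.map (fun pr =>
      SForm.conj (.dia pr.1 (.var (pv pr))) (.neg (.dia pr.2 (.var (pv pr))))))))

/-- `φ_D := φ[I⁺ ↦ ⊤, I⁻ ↦ ⊥] ∧ ψ_D`. -/
noncomputable def phiD (φ : SForm) (P N : Finset (ℕ × ℕ)) (pv : ℕ × ℕ → ℕ) : SForm :=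
  .conj (substLe P N φ) (psiD P N pv)

/-! ### The closure, s-elementary sets, and the generalised Büchi automaton -/

/-- Subformulae of a formula. -/
def subfs : SForm → Set SForm
  | .var p => {SForm.var p}
  | .le s s' => {SForm.le s s'}
  | .tru => {SForm.tru}
  | .fls => {SForm.fls}
  | .neg a => insert (SForm.neg a) (subfs a)
  | .conj a b => insert (SForm.conj a b) (subfs a ∪ subfs b)
  | .dia s a => insert (SForm.dia s a) (subfs a)
  | .box s a => insert (SForm.box s a) (subfs a)
  | .next a => insert (SForm.next a) (subfs a)
  | .until_ a b => insert (SForm.until_ a b) (subfs a ∪ subfs b)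

/-- Negation, identifying `¬¬ψ` with `ψ`. -/
def negId : SForm → SForm
  | .neg a => a
  | a => .neg a

/-- The closure `cl(φ)`: the smallest set containing all subformulae of `φ`,
`⊤` and `⊥`, closed under negation (identifying `¬¬ψ` with `ψ`), and
containing `X(ψ U ψ')` whenever `ψ U ψ'` is in it. -/
inductive Cl (φ : SForm) : SForm → Prop where
  | base {ψ} : ψ ∈ subfs φ → Cl φ ψ
  | tru : Cl φ .tru
  | fls : Cl φ .fls
  | nc {ψ} : Cl φ ψ → Cl φ (negId ψ)
  | nextU {a b} : Cl φ (.until_ a b) → Cl φ (.next (.until_ a b))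

/-- A PSL model with a finite nonempty set `W` of precisifications;
`Vs` is the valuation on standpoint symbols (with `0` the universal
standpoint `*`) and `Vp` the valuation on propositional variables. -/
structure PSLM (W : Type) where
  Vs : ℕ → Set W
  Vp : ℕ → Set W
  hfin : Finite W
  hne : Nonempty W
  hs : ∀ s, (Vs s).Nonempty
  hstar : Vs 0 = Set.univ

/-- PSL satisfaction of an SLTL formula without temporal connectives
(the clauses for `X` and `U` are never used on PSL formulae). -/
def FSat {W : Type} (M : PSLM W) : SForm → W → Prop
  | .var p, π => π ∈ M.Vp p
  | .le s s', _ => M.Vs s ⊆ M.Vs s'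
  | .tru, _ => True
  | .fls, _ => False
  | .neg a, π => ¬ FSat M a π
  | .conj a b, π => FSat M a π ∧ FSat M b π
  | .dia s a, _ => ∃ π' ∈ M.Vs s, FSat M a π'
  | .box s a, _ => ∀ π' ∈ M.Vs s, FSat M a π'
  | .next _, _ => False
  | .until_ _ _, _ => False

/-- `B` is standpoint-consistent: the conjunction of all PSL formulae in `B`
is PSL-satisfiable. -/
def StandCons (B : Set SForm) : Prop :=
  ∃ (W : Type) (M : PSLM W) (π : W), ∀ ψ ∈ B, noTemp ψ → FSat M ψ π

/-- `B ⊆ cl(φ)` is maximally consistent. -/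
def MaxCons (φ : SForm) (B : Set SForm) : Prop :=
  (∀ ψ ∈ B, Cl φ ψ) ∧ SForm.tru ∈ B ∧ SForm.fls ∉ B ∧
  (∀ ψ, Cl φ (.neg ψ) → (ψ ∈ B ↔ SForm.neg ψ ∉ B)) ∧
  (∀ a b, Cl φ (.conj a b) → (SForm.conj a b ∈ B ↔ a ∈ B ∧ b ∈ B)) ∧
  (∀ a b, Cl φ (.until_ a b) →
    (SForm.until_ a b ∈ B ↔ b ∈ B ∨ (a ∈ B ∧ SForm.next (.until_ a b) ∈ B)))

/-- s-elementary: maximally consistent and standpoint-consistent. -/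
def SElem (φ : SForm) (B : Set SForm) : Prop := MaxCons φ B ∧ StandCons B

/-- `B₀B₁…` is an accepting run of the generalised nondeterministic Büchi
automaton `A_φ` on the word `A₀A₁…`:  `B₀` is initial (`φ ∈ B₀`), every `Bᵢ`
is a state (s-elementary), `Aᵢ = Bᵢ ∩ P(φ)`, consecutive states respect the
transition relation, and every accepting set is visited infinitely often. -/
def AcceptingRun (φ : SForm) (B : ℕ → Set SForm) (A : ℕ → Set ℕ) : Prop :=
  φ ∈ B 0 ∧ (∀ i, SElem φ (B i)) ∧
  (∀ i, A i = {p : ℕ | SForm.var p ∈ B i ∧ p ∈ varsSF φ}) ∧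
  (∀ i ψ, Cl φ (.next ψ) → (SForm.next ψ ∈ B i ↔ ψ ∈ B (i + 1))) ∧
  (∀ a b, Cl φ (.until_ a b) → ∀ i, ∃ j, i ≤ j ∧ (SForm.until_ a b ∉ B j ∨ b ∈ B j))

/-- The language of `A_φ` is non-empty. -/
def LangNonempty (φ : SForm) : Prop :=
  ∃ (B : ℕ → Set SForm) (A : ℕ → Set ℕ), AcceptingRun φ B A

section Stmt18Aux

lemma mem_subfs_self : ∀ ψ : SForm, ψ ∈ subfs ψ := by
  intro ψ; cases ψ <;> simp [subfs]

lemma subfs_subset : ∀ φ : SForm, ∀ ψ ∈ subfs φ, subfs ψ ⊆ subfs φ := by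
  intro φ
  induction φ with
  | var p =>
      intro ψ h
      simp only [subfs, Set.mem_singleton_iff] at h; subst h; exact subset_rfl
  | le s s' =>
      intro ψ h
      simp only [subfs, Set.mem_singleton_iff] at h; subst h; exact subset_rfl
  | tru =>
      intro ψ h
      simp only [subfs, Set.mem_singleton_iff] at h; subst h; exact subset_rfl
  | fls =>
      intro ψ h
      simp only [subfs, Set.mem_singleton_iff] at h; subst h; exact subset_rfl
  | neg a ih =>
      intro ψ h
      rcases Set.mem_insert_iff.mp h with rfl | h
      · exact subset_rfl
      · exact (ih ψ h).trans (Set.subset_insert _ _)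
  | dia s a ih =>
      intro ψ h
      rcases Set.mem_insert_iff.mp h with rfl | h
      · exact subset_rfl
      · exact (ih ψ h).trans (Set.subset_insert _ _)
  | box s a ih =>
      intro ψ h
      rcases Set.mem_insert_iff.mp h with rfl | h
      · exact subset_rfl
      · exact (ih ψ h).trans (Set.subset_insert _ _)
  | next a ih =>
      intro ψ h
      rcases Set.mem_insert_iff.mp h with rfl | h
      · exact subset_rfl
      · exact (ih ψ h).trans (Set.subset_insert _ _)
  | conj a b iha ihb =>
      intro ψ h
      rcases Set.mem_insert_iff.mp h with rfl | h
      · exact subset_rfl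
      · rcases h with h | h
        · exact (iha ψ h).trans ((Set.subset_union_left).trans (Set.subset_insert _ _))
        · exact (ihb ψ h).trans ((Set.subset_union_right).trans (Set.subset_insert _ _))
  | until_ a b iha ihb =>
      intro ψ h
      rcases Set.mem_insert_iff.mp h with rfl | h
      · exact subset_rfl
      · rcases h with h | h
        · exact (iha ψ h).trans ((Set.subset_union_left).trans (Set.subset_insert _ _))
        · exact (ihb ψ h).trans ((Set.subset_union_right).trans (Set.subset_insert _ _))

lemma subfs_negId (ψ : SForm) : subfs (negId ψ) ⊆ insert (negId ψ) (subfs ψ) := by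
  cases ψ <;>
    first
      | exact (Set.subset_insert _ _).trans (Set.subset_insert _ _)
      | exact subset_rfl

lemma Cl_of_subfs {φ ψ : SForm} (h : Cl φ ψ) : ∀ χ ∈ subfs ψ, Cl φ χ := by
  induction h with
  | base hb => exact fun χ hχ => Cl.base (subfs_subset _ _ hb hχ)
  | tru =>
      intro χ hχ
      simp only [subfs, Set.mem_singleton_iff] at hχ; subst hχ; exact Cl.tru
  | fls =>
      intro χ hχ
      simp only [subfs, Set.mem_singleton_iff] at hχ; subst hχ; exact Cl.fls
  | nc h ih =>
      intro χ hχ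
      rcases Set.mem_insert_iff.mp (subfs_negId _ hχ) with rfl | hχ
      · exact Cl.nc h
      · exact ih χ hχ
  | nextU h ih =>
      intro χ hχ
      rcases Set.mem_insert_iff.mp hχ with rfl | hχ
      · exact Cl.nextU h
      · exact ih χ hχ

lemma leSubs_subfs : ∀ φ : SForm, ∀ ψ ∈ subfs φ, leSubs ψ ⊆ leSubs φ := by
  intro φ
  induction φ with
  | var p =>
      intro ψ h
      simp only [subfs, Set.mem_singleton_iff] at h; subst h; exact subset_rfl
  | le s s' =>
      intro ψ h
      simp only [subfs, Set.mem_singleton_iff] at h; subst h; exact subset_rfl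
  | tru =>
      intro ψ h
      simp only [subfs, Set.mem_singleton_iff] at h; subst h; exact subset_rfl
  | fls =>
      intro ψ h
      simp only [subfs, Set.mem_singleton_iff] at h; subst h; exact subset_rfl
  | neg a ih =>
      intro ψ h
      rcases Set.mem_insert_iff.mp h with rfl | h
      · exact subset_rfl
      · exact ih ψ h
  | dia s a ih =>
      intro ψ h
      rcases Set.mem_insert_iff.mp h with rfl | h
      · exact subset_rfl
      · exact ih ψ h
  | box s a ih =>
      intro ψ h
      rcases Set.mem_insert_iff.mp h with rfl | h
      · exact subset_rfl
      · exact ih ψ h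
  | next a ih =>
      intro ψ h
      rcases Set.mem_insert_iff.mp h with rfl | h
      · exact subset_rfl
      · exact ih ψ h
  | conj a b iha ihb =>
      intro ψ h
      rcases Set.mem_insert_iff.mp h with rfl | h
      · exact subset_rfl
      · rcases h with h | h
        · exact (iha ψ h).trans Finset.subset_union_left
        · exact (ihb ψ h).trans Finset.subset_union_right
  | until_ a b iha ihb =>
      intro ψ h
      rcases Set.mem_insert_iff.mp h with rfl | h
      · exact subset_rfl
      · rcases h with h | h
        · exact (iha ψ h).trans Finset.subset_union_left
        · exact (ihb ψ h).trans Finset.subset_union_right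

lemma leSubs_negId (ψ : SForm) : leSubs (negId ψ) = leSubs ψ := by
  cases ψ <;> rfl

lemma leSubs_Cl {φ ψ : SForm} (h : Cl φ ψ) : leSubs ψ ⊆ leSubs φ := by
  induction h with
  | base hb => exact leSubs_subfs _ _ hb
  | tru => exact Finset.empty_subset _
  | fls => exact Finset.empty_subset _
  | nc h ih => rw [leSubs_negId]; exact ih
  | nextU h ih => exact ih

lemma substLe_leSubs {P N : Finset (ℕ × ℕ)} :
    ∀ a : SForm, leSubs a ⊆ P ∪ N → leSubs (substLe P N a) = ∅ := by
  intro a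
  induction a with
  | var p => intro _; rfl
  | le s s' =>
      intro h
      simp only [substLe]
      split_ifs with h1 h2
      · rfl
      · rfl
      · exfalso
        have := h (Finset.mem_singleton_self (s, s'))
        rcases Finset.mem_union.mp this with h' | h'
        · exact h1 h'
        · exact h2 h'
  | tru => intro _; rfl
  | fls => intro _; rfl
  | neg a ih => intro h; exact ih h
  | dia s a ih => intro h; exact ih h
  | box s a ih => intro h; exact ih h
  | next a ih => intro h; exact ih h
  | conj a b iha ihb =>
      intro h
      show leSubs (substLe P N a) ∪ leSubs (substLe P N b) = ∅
      rw [iha (Finset.union_subset_iff.mp h).1, ihb (Finset.union_subset_iff.mp h).2,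
        Finset.empty_union]
  | until_ a b iha ihb =>
      intro h
      show leSubs (substLe P N a) ∪ leSubs (substLe P N b) = ∅
      rw [iha (Finset.union_subset_iff.mp h).1, ihb (Finset.union_subset_iff.mp h).2,
        Finset.empty_union]

lemma leSubs_bigAnd : ∀ l : List SForm, ∀ pr, pr ∈ leSubs (bigAnd l) →
    ∃ ψ ∈ l, pr ∈ leSubs ψ := by
  intro l
  induction l with
  | nil => intro pr h; exact absurd h (Finset.notMem_empty _)
  | cons x t ih =>
      intro pr h
      rcases Finset.mem_union.mp h with h | h
      · exact ⟨x, List.mem_cons_self, h⟩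
      · obtain ⟨ψ, hψ, hpr⟩ := ih pr h
        exact ⟨ψ, List.mem_cons_of_mem _ hψ, hpr⟩

lemma leSubs_psiD (P N : Finset (ℕ × ℕ)) (pv : ℕ × ℕ → ℕ) :
    leSubs (psiD P N pv) ⊆ P := by
  intro pr hpr
  have hpr' : pr ∈ leSubs (bigAnd (P.toList.map (fun pr => SForm.le pr.1 pr.2))) ∪
      leSubs (bigAnd (N.toList.map (fun pr =>
        SForm.conj (.dia pr.1 (.var (pv pr))) (.neg (.dia pr.2 (.var (pv pr))))))) := by
    simpa [psiD, SForm.G, leSubs] using hpr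
  rcases Finset.mem_union.mp hpr' with h | h
  · obtain ⟨ψ, hψ, hmem⟩ := leSubs_bigAnd _ pr h
    obtain ⟨q, hq, rfl⟩ := List.mem_map.mp hψ
    have : pr = q := Finset.mem_singleton.mp hmem
    subst this
    exact Finset.mem_toList.mp hq
  · obtain ⟨ψ, hψ, hmem⟩ := leSubs_bigAnd _ pr h
    obtain ⟨q, hq, rfl⟩ := List.mem_map.mp hψ
    exact absurd hmem (by simp [leSubs])

lemma Cl_le_mem {φ : SForm} {P N : Finset (ℕ × ℕ)} {pv : ℕ × ℕ → ℕ} {s s' : ℕ}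
    (hpart : P ∪ N = leSubs φ) (h : Cl (phiD φ P N pv) (.le s s')) : (s, s') ∈ P := by
  have hm := leSubs_Cl h (Finset.mem_singleton_self (s, s'))
  have hsub : leSubs (substLe P N φ) = ∅ :=
    substLe_leSubs φ (by rw [hpart])
  rcases Finset.mem_union.mp hm with h' | h'
  · rw [hsub] at h'; exact absurd h' (Finset.notMem_empty _)
  · exact leSubs_psiD _ _ _ h'

lemma subfs_finite : ∀ φ : SForm, (subfs φ).Finite := by
  intro φ
  induction φ with
  | var p => exact Set.finite_singleton _
  | le s s' => exact Set.finite_singleton _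
  | tru => exact Set.finite_singleton _
  | fls => exact Set.finite_singleton _
  | neg a ih => exact ih.insert _
  | dia s a ih => exact ih.insert _
  | box s a ih => exact ih.insert _
  | next a ih => exact ih.insert _
  | conj a b iha ihb => exact (iha.union ihb).insert _
  | until_ a b iha ihb => exact (iha.union ihb).insert _

lemma Cl_finite (φ : SForm) : {ψ | Cl φ ψ}.Finite := by
  classical
  set S : Set SForm := insert .tru (insert .fls (subfs φ)) with hS
  have hSfin : S.Finite := ((subfs_finite φ).insert _).insert _
  have hT : {ψ | Cl φ ψ} ⊆
      ((S ∪ SForm.neg '' S) ∪ SForm.next '' S) ∪ SForm.neg '' (SForm.next '' S) := by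
    intro ψ h
    induction h with
    | base hb => exact Or.inl (Or.inl (Or.inl (Or.inr (Or.inr hb))))
    | tru => exact Or.inl (Or.inl (Or.inl (Or.inl rfl)))
    | fls => exact Or.inl (Or.inl (Or.inl (Or.inr (Or.inl rfl))))
    | nc h ih =>
        rename_i ψ'
        rcases ih with ((h1 | h2) | h3) | h4
        · cases ψ' with
          | neg a =>
              have hsub : SForm.neg a ∈ subfs φ := by
                rcases h1 with h | h | h
                · exact absurd h (by simp)
                · exact absurd h (by simp)
                · exact h
              have ha : a ∈ subfs φ :=
                subfs_subset φ (SForm.neg a) hsub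
                  (Set.mem_insert_iff.mpr (Or.inr (mem_subfs_self a)))
              exact Or.inl (Or.inl (Or.inl (Or.inr (Or.inr ha))))
          | var p => exact Or.inl (Or.inl (Or.inr ⟨_, h1, rfl⟩))
          | le s s' => exact Or.inl (Or.inl (Or.inr ⟨_, h1, rfl⟩))
          | tru => exact Or.inl (Or.inl (Or.inr ⟨_, h1, rfl⟩))
          | fls => exact Or.inl (Or.inl (Or.inr ⟨_, h1, rfl⟩))
          | conj a b => exact Or.inl (Or.inl (Or.inr ⟨_, h1, rfl⟩))
          | dia s a => exact Or.inl (Or.inl (Or.inr ⟨_, h1, rfl⟩))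
          | box s a => exact Or.inl (Or.inl (Or.inr ⟨_, h1, rfl⟩))
          | next a => exact Or.inl (Or.inl (Or.inr ⟨_, h1, rfl⟩))
          | until_ a b => exact Or.inl (Or.inl (Or.inr ⟨_, h1, rfl⟩))
        · obtain ⟨a, ha, rfl⟩ := h2
          exact Or.inl (Or.inl (Or.inl ha))
        · obtain ⟨a, ha, rfl⟩ := h3
          exact Or.inr ⟨SForm.next a, ⟨a, ha, rfl⟩, rfl⟩
        · obtain ⟨b, hb, rfl⟩ := h4
          exact Or.inl (Or.inr hb)
    | nextU h ih =>
        rename_i a b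
        have hmem : SForm.until_ a b ∈ S := by
          rcases ih with ((h1 | h2) | h3) | h4
          · exact h1
          · obtain ⟨x, _, hx⟩ := h2; exact absurd hx (by simp)
          · obtain ⟨x, _, hx⟩ := h3; exact absurd hx (by simp)
          · obtain ⟨x, _, hx⟩ := h4; exact absurd hx (by simp)
        exact Or.inl (Or.inr ⟨_, hmem, rfl⟩)
  exact Set.Finite.subset
    (((hSfin.union (hSfin.image _)).union (hSfin.image _)).union ((hSfin.image _).image _)) hT

def typeOf (M : SLTLModel) (Φ : SForm) (i : ℕ) (σ' : Trace) : Set SForm :=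
  {ψ | Cl Φ ψ ∧ noTemp ψ ∧ SSat M ψ σ' i}

def Wt (M : SLTLModel) (Φ : SForm) (i : ℕ) : Type :=
  {S : Set SForm // ∃ σ' ∈ M.Pi, S = typeOf M Φ i σ'}

lemma Wt_sub {M : SLTLModel} {Φ : SForm} {i : ℕ} (w : Wt M Φ i) :
    ∀ ψ ∈ w.val, Cl Φ ψ := by
  obtain ⟨S, σ', hσ', rfl⟩ := w
  exact fun ψ hψ => hψ.1

lemma Wt_finite (M : SLTLModel) (Φ : SForm) (i : ℕ) : Finite (Wt M Φ i) := by
  have hK : {ψ | Cl Φ ψ}.Finite := Cl_finite Φ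
  haveI := hK.to_subtype
  have hinj : Function.Injective
      (fun w : Wt M Φ i => ({x | x.val ∈ w.val} : Set {ψ | Cl Φ ψ})) := by
    intro w1 w2 h
    have h' : ({x | x.val ∈ w1.val} : Set {ψ | Cl Φ ψ}) = {x | x.val ∈ w2.val} := h
    apply Subtype.ext
    ext ψ
    constructor
    · intro hψ
      have h1 : (⟨ψ, Wt_sub w1 ψ hψ⟩ : {ψ | Cl Φ ψ}) ∈
          {x : {ψ | Cl Φ ψ} | x.val ∈ w1.val} := hψ
      rw [h'] at h1
      exact h1
    · intro hψ
      have h1 : (⟨ψ, Wt_sub w2 ψ hψ⟩ : {ψ | Cl Φ ψ}) ∈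
          {x : {ψ | Cl Φ ψ} | x.val ∈ w2.val} := hψ
      rw [← h'] at h1
      exact h1
  exact Finite.of_injective _ hinj

noncomputable def Mf (M : SLTLModel) (Φ : SForm) (i : ℕ) : PSLM (Wt M Φ i) where
  Vs s := {w | ∃ σ' ∈ M.lam s, w.val = typeOf M Φ i σ'}
  Vp p := {w | SForm.var p ∈ w.val}
  hfin := Wt_finite M Φ i
  hne := ⟨⟨typeOf M Φ i M.pi_nonempty.choose, ⟨M.pi_nonempty.choose, M.pi_nonempty.choose_spec, rfl⟩⟩⟩
  hs s := ⟨⟨typeOf M Φ i (M.lam_nonempty s).choose,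
      ⟨(M.lam_nonempty s).choose, M.lam_sub s (M.lam_nonempty s).choose_spec, rfl⟩⟩,
    ⟨(M.lam_nonempty s).choose, (M.lam_nonempty s).choose_spec, rfl⟩⟩
  hstar := by
    apply Set.eq_univ_iff_forall.mpr
    intro w
    obtain ⟨σ', hσ', hval⟩ := w.2
    exact ⟨σ', by rw [M.lam_star]; exact hσ', hval⟩

lemma filt (M : SLTLModel) (Φ : SForm) (i : ℕ)
    (hle : ∀ s s', Cl Φ (.le s s') → M.lam s ⊆ M.lam s') :
    ∀ ψ : SForm, Cl Φ ψ → noTemp ψ → ∀ σ', ∀ hσ' : σ' ∈ M.Pi,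
      (FSat (Mf M Φ i) ψ ⟨typeOf M Φ i σ', ⟨σ', hσ', rfl⟩⟩ ↔ SSat M ψ σ' i) := by
  intro ψ
  induction ψ with
  | var p =>
      intro hc _ σ' hσ'
      show SForm.var p ∈ typeOf M Φ i σ' ↔ SSat M (SForm.var p) σ' i
      constructor
      · rintro ⟨_, _, h⟩; exact h
      · intro h; exact ⟨hc, trivial, h⟩
  | le s s' =>
      intro hc _ σ'' hσ''
      have hss := hle s s' hc
      constructor
      · intro _; exact hss
      · intro _
        rintro w ⟨σ0, hσ0, hval⟩
        exact ⟨σ0, hss hσ0, hval⟩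
  | tru => intro _ _ _ _; exact Iff.rfl
  | fls => intro _ _ _ _; exact Iff.rfl
  | neg a ih =>
      intro hc hnt σ' hσ'
      have hca : Cl Φ a :=
        Cl_of_subfs hc a (Set.mem_insert_iff.mpr (Or.inr (mem_subfs_self a)))
      exact not_congr (ih hca hnt σ' hσ')
  | conj a b iha ihb =>
      intro hc hnt σ' hσ'
      have hca : Cl Φ a := Cl_of_subfs hc a
        (Set.mem_insert_iff.mpr (Or.inr (Set.mem_union_left _ (mem_subfs_self a))))
      have hcb : Cl Φ b := Cl_of_subfs hc b
        (Set.mem_insert_iff.mpr (Or.inr (Set.mem_union_right _ (mem_subfs_self b))))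
      exact and_congr (iha hca hnt.1 σ' hσ') (ihb hcb hnt.2 σ' hσ')
  | dia s a ih =>
      intro hc hnt σ' hσ'
      have hca : Cl Φ a :=
        Cl_of_subfs hc a (Set.mem_insert_iff.mpr (Or.inr (mem_subfs_self a)))
      constructor
      · rintro ⟨π', ⟨σ'', hσ'', hval⟩, hf⟩
        have hmem : σ'' ∈ M.Pi := M.lam_sub s hσ''
        have hπ : π' = ⟨typeOf M Φ i σ'', ⟨σ'', hmem, rfl⟩⟩ := Subtype.ext hval
        rw [hπ] at hf
        exact ⟨σ'', hσ'', (ih hca hnt σ'' hmem).mp hf⟩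
      · rintro ⟨σ'', hσ'', hs'⟩
        have hmem : σ'' ∈ M.Pi := M.lam_sub s hσ''
        exact ⟨⟨typeOf M Φ i σ'', ⟨σ'', hmem, rfl⟩⟩, ⟨σ'', hσ'', rfl⟩,
          (ih hca hnt σ'' hmem).mpr hs'⟩
  | box s a ih =>
      intro hc hnt σ' hσ'
      have hca : Cl Φ a :=
        Cl_of_subfs hc a (Set.mem_insert_iff.mpr (Or.inr (mem_subfs_self a)))
      constructor
      · intro hf σ'' hσ''
        have hmem : σ'' ∈ M.Pi := M.lam_sub s hσ''
        exact (ih hca hnt σ'' hmem).mp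
          (hf ⟨typeOf M Φ i σ'', ⟨σ'', hmem, rfl⟩⟩ ⟨σ'', hσ'', rfl⟩)
      · rintro hf π' ⟨σ'', hσ'', hval⟩
        have hmem : σ'' ∈ M.Pi := M.lam_sub s hσ''
        have hπ : π' = ⟨typeOf M Φ i σ'', ⟨σ'', hmem, rfl⟩⟩ := Subtype.ext hval
        rw [hπ]
        exact (ih hca hnt σ'' hmem).mpr (hf σ'' hσ'')
  | next a ih => intro _ hnt; exact hnt.elim
  | until_ a b iha ihb => intro _ hnt; exact hnt.elim

lemma SSat_until (M : SLTLModel) (a b : SForm) (σ : Trace) (i : ℕ) :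
    SSat M (.until_ a b) σ i ↔
      SSat M b σ i ∨ (SSat M a σ i ∧ SSat M (.until_ a b) σ (i + 1)) := by
  constructor
  · rintro ⟨i', hii', hb, ha⟩
    rcases eq_or_lt_of_le hii' with rfl | hlt
    · exact Or.inl hb
    · exact Or.inr ⟨ha i le_rfl hlt,
        ⟨i', hlt, hb, fun i'' h1 h2 => ha i'' (by omega) h2⟩⟩
  · rintro (hb | ⟨ha, i', h1, hb, hrest⟩)
    · exact ⟨i, le_rfl, hb, fun i'' h1 h2 => absurd h2 (by omega)⟩
    · refine ⟨i', by omega, hb, fun i'' hh1 hh2 => ?_⟩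
      rcases eq_or_lt_of_le hh1 with rfl | hlt
      · exact ha
      · exact hrest i'' (by omega) hh2

lemma SSat_bigAnd (M : SLTLModel) (σ : Trace) (i : ℕ) :
    ∀ l : List SForm, SSat M (bigAnd l) σ i → ∀ ψ ∈ l, SSat M ψ σ i := by
  intro l
  induction l with
  | nil => intro _ ψ hψ; exact absurd hψ List.not_mem_nil
  | cons x t ih =>
      intro hs ψ hψ
      have hs' : SSat M x σ i ∧ SSat M (bigAnd t) σ i := hs
      rcases List.mem_cons.mp hψ with rfl | hψ
      · exact hs'.1
      · exact ih hs'.2 ψ hψ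

lemma psiD_sat {M : SLTLModel} {σ : Trace} {P N : Finset (ℕ × ℕ)} {pv : ℕ × ℕ → ℕ}
    (h : SSat M (psiD P N pv) σ 0) : ∀ pr ∈ P, M.lam pr.1 ⊆ M.lam pr.2 := by
  intro pr hpr
  have hA : SSat M (bigAnd (P.toList.map (fun q => SForm.le q.1 q.2))) σ 0 := by
    by_contra hx
    exact h ⟨0, le_rfl, fun hcc => hx hcc.1, fun _ _ _ => trivial⟩
  exact SSat_bigAnd M σ 0 _ hA (SForm.le pr.1 pr.2)
    (List.mem_map.mpr ⟨pr, Finset.mem_toList.mpr hpr, rfl⟩)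

end Stmt18Aux
/-- If `M, σ, 0 ⊨ φ_D`, then the sets
`B_i := {ψ ∈ cl(φ_D) | M, σ, i ⊨ ψ}` are s-elementary and `B₀B₁…` is an
accepting run of `A_{φ_D}` on the word `A₀A₁…` with `A_i := B_i ∩ P(φ_D)`. -/
theorem stmt18 (φ : SForm) (pv : ℕ × ℕ → ℕ) (P N : Finset (ℕ × ℕ))
    (hφ : isLTLPSL φ) (hinj : Function.Injective pv)
    (hfresh : ∀ pr, pv pr ∉ varsSF φ)
    (hpart : P ∪ N = leSubs φ) (hdisj : Disjoint P N)
    (M : SLTLModel) (σ : Trace) (hσ : σ ∈ M.Pi)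
    (hsat : SSat M (phiD φ P N pv) σ 0) :
    (∀ i, SElem (phiD φ P N pv) {ψ | Cl (phiD φ P N pv) ψ ∧ SSat M ψ σ i}) ∧
    AcceptingRun (phiD φ P N pv)
      (fun i => {ψ | Cl (phiD φ P N pv) ψ ∧ SSat M ψ σ i})
      (fun i => {p : ℕ |
        SForm.var p ∈ {ψ | Cl (phiD φ P N pv) ψ ∧ SSat M ψ σ i} ∧
        p ∈ varsSF (phiD φ P N pv)}) := by
  classical
  have hsat2 : SSat M (psiD P N pv) σ 0 := hsat.2
  have hle : ∀ s s', Cl (phiD φ P N pv) (.le s s') → M.lam s ⊆ M.lam s' := by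
    intro s s' hc
    exact psiD_sat hsat2 (s, s') (Cl_le_mem hpart hc)
  have helem : ∀ i, SElem (phiD φ P N pv)
      {ψ | Cl (phiD φ P N pv) ψ ∧ SSat M ψ σ i} := by
    intro i
    constructor
    · refine ⟨fun ψ h => h.1, ⟨Cl.tru, trivial⟩, fun h => h.2, ?_, ?_, ?_⟩
      · intro ψ hc
        have hcψ : Cl (phiD φ P N pv) ψ := Cl.nc hc
        constructor
        · rintro ⟨_, hψ⟩ ⟨_, hn⟩; exact hn hψ
        · intro hn
          refine ⟨hcψ, ?_⟩
          by_contra hx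
          exact hn ⟨hc, hx⟩
      · intro a b hc
        have hca : Cl (phiD φ P N pv) a := Cl_of_subfs hc a
          (Set.mem_insert_iff.mpr (Or.inr (Set.mem_union_left _ (mem_subfs_self a))))
        have hcb : Cl (phiD φ P N pv) b := Cl_of_subfs hc b
          (Set.mem_insert_iff.mpr (Or.inr (Set.mem_union_right _ (mem_subfs_self b))))
        constructor
        · rintro ⟨_, ha, hb⟩; exact ⟨⟨hca, ha⟩, ⟨hcb, hb⟩⟩
        · rintro ⟨⟨_, ha⟩, ⟨_, hb⟩⟩; exact ⟨hc, ha, hb⟩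
      · intro a b hc
        have hca : Cl (phiD φ P N pv) a := Cl_of_subfs hc a
          (Set.mem_insert_iff.mpr (Or.inr (Set.mem_union_left _ (mem_subfs_self a))))
        have hcb : Cl (phiD φ P N pv) b := Cl_of_subfs hc b
          (Set.mem_insert_iff.mpr (Or.inr (Set.mem_union_right _ (mem_subfs_self b))))
        have hcn : Cl (phiD φ P N pv) (.next (.until_ a b)) := Cl.nextU hc
        constructor
        · rintro ⟨_, hu⟩
          rcases (SSat_until M a b σ i).mp hu with hb | ⟨ha, hu'⟩
          · exact Or.inl ⟨hcb, hb⟩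
          · exact Or.inr ⟨⟨hca, ha⟩, ⟨hcn, hu'⟩⟩
        · rintro (⟨_, hb⟩ | ⟨⟨_, ha⟩, ⟨_, hn⟩⟩)
          · exact ⟨hc, (SSat_until M a b σ i).mpr (Or.inl hb)⟩
          · exact ⟨hc, (SSat_until M a b σ i).mpr (Or.inr ⟨ha, hn⟩)⟩
    · exact ⟨Wt M (phiD φ P N pv) i, Mf M (phiD φ P N pv) i,
        ⟨typeOf M (phiD φ P N pv) i σ, ⟨σ, hσ, rfl⟩⟩,
        fun ψ hψ hnt => (filt M (phiD φ P N pv) i hle ψ hψ.1 hnt σ hσ).mpr hψ.2⟩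
  refine ⟨helem, ⟨Cl.base (mem_subfs_self _), hsat⟩, helem, fun i => rfl, ?_, ?_⟩
  · intro i ψ hc
    have hcψ : Cl (phiD φ P N pv) ψ :=
      Cl_of_subfs hc ψ (Set.mem_insert_iff.mpr (Or.inr (mem_subfs_self ψ)))
    constructor
    · rintro ⟨_, h⟩; exact ⟨hcψ, h⟩
    · rintro ⟨_, h⟩; exact ⟨hc, h⟩
  · intro a b hc i
    have hcb : Cl (phiD φ P N pv) b := Cl_of_subfs hc b
      (Set.mem_insert_iff.mpr (Or.inr (Set.mem_union_right _ (mem_subfs_self b))))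
    by_cases h : SSat M (.until_ a b) σ i
    · obtain ⟨i', hi', hb, _⟩ := h
      exact ⟨i', hi', Or.inr ⟨hcb, hb⟩⟩
    · exact ⟨i, le_rfl, Or.inl (fun hx => h hx.2)⟩
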